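/- Let T > 0 and let ℛ : [0,T] → (0,∞) be C¹. Let U ⊆ ℝ² be an open set containing the boundary curve {(t, ℛ(t)) : t ∈ [0,T]}, and let m, ρ, p_rad, v, φ be real-valued functions on U with m of class C¹, satisfying on U: 1 − 2m(t,r)/r > 0, ∂_t m = −4πr²(ρ + p_rad)e^{φ} v ⟨v⟩ and ∂_r m = 4πr²(ρ + (ρ + p_rad)v²/(1 − 2m/r)), where ⟨v⟩ = (1 + v²/(1 − 2m/r))^{1/2}. Assume the boundary conditions p_rad(t, ℛ(t)) = 0 and ℛ'(t) = (e^{φ} v/⟨v⟩)(t, ℛ(t)) for all t ∈ [0,T]. Then the total mass 𝓜(t) = m(t, ℛ(t)) is constant on [0,T]. -/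

import Mathlib

open Real Set

/-- The relativistic Lorentz factor `⟨v⟩ = √(1 + v²/(1 − 2m/r))`. -/
noncomputable def vbar (m v : ℝ × ℝ → ℝ) (x : ℝ × ℝ) : ℝ :=
  Real.sqrt (1 + (v x) ^ 2 / (1 - 2 * m x / x.2))

/-- Proposition (conservation of total mass): for a spherically symmetric relativistic
ball of matter, with the Einstein equations for the Hawking mass `m` holding on an open
set `U` containing the boundary curve, the radial pressure vanishing on the boundary and
the boundary moving with the matter, the total mass `𝓜(t) = m(t, ℛ(t))` is constant. -/
theorem total_mass_conserved
    (T : ℝ) (hT : 0 < T)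
    (R : ℝ → ℝ) (hRpos : ∀ t ∈ Icc (0 : ℝ) T, 0 < R t)
    (hRC1 : ContDiffOn ℝ 1 R (Icc 0 T))
    (U : Set (ℝ × ℝ)) (hU : IsOpen U)
    (hbd : ∀ t ∈ Icc (0 : ℝ) T, (t, R t) ∈ U)
    (m ρ p v φ : ℝ × ℝ → ℝ)
    (hmC1 : ContDiffOn ℝ 1 m U)
    (hpos : ∀ x ∈ U, 0 < 1 - 2 * m x / x.2)
    (hm : ∀ x ∈ U, HasFDerivAt m
      ((-(4 * π * x.2 ^ 2 * (ρ x + p x) * Real.exp (φ x) * v x * vbar m v x)) •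
          (ContinuousLinearMap.fst ℝ ℝ ℝ)
        + (4 * π * x.2 ^ 2 * (ρ x + (ρ x + p x) * (v x) ^ 2 / (1 - 2 * m x / x.2))) •
          (ContinuousLinearMap.snd ℝ ℝ ℝ)) x)
    (hpbd : ∀ t ∈ Icc (0 : ℝ) T, p (t, R t) = 0)
    (hRdot : ∀ t ∈ Icc (0 : ℝ) T,
      HasDerivWithinAt R (Real.exp (φ (t, R t)) * v (t, R t) / vbar m v (t, R t))
        (Icc 0 T) t) :
    ∀ t ∈ Icc (0 : ℝ) T, m (t, R t) = m (0, R 0) := by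

  have key : ∀ t ∈ Icc (0 : ℝ) T, (fun s => m (s, R s)) t = (fun s => m (s, R s)) 0 := by
    apply constant_of_has_deriv_right_zero
    · exact hmC1.continuousOn.comp (continuousOn_id.prodMk hRC1.continuousOn)
        (fun t ht => hbd t ht)
    · intro x hx
      have hx' : x ∈ Icc (0 : ℝ) T := ⟨hx.1, hx.2.le⟩
      have hxU : (x, R x) ∈ U := hbd x hx'
      -- the curve t ↦ (t, R t)
      have hc : HasDerivWithinAt (fun s => ((s : ℝ), R s))
          (1, Real.exp (φ (x, R x)) * v (x, R x) / vbar m v (x, R x)) (Icc 0 T) x :=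
        (hasDerivWithinAt_id x _).prodMk (hRdot x hx')
      have hcomp := (hm _ hxU).comp_hasDerivWithinAt x hc
      have h0 : 0 < 1 - 2 * m (x, R x) / (x, R x).2 := hpos _ hxU
      set q := 1 - 2 * m (x, R x) / (x, R x).2 with hq
      set s := vbar m v (x, R x) with hsdef
      have h1 : 0 < 1 + (v (x, R x)) ^ 2 / q := by positivity
      have hs : 0 < s := Real.sqrt_pos.mpr h1
      have hs2 : s ^ 2 = 1 + (v (x, R x)) ^ 2 / q := Real.sq_sqrt h1.le
      have hp0 : p (x, R x) = 0 := hpbd x hx'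
      have hval : ((-(4 * π * (x, R x).2 ^ 2 * (ρ (x, R x) + p (x, R x)) *
            Real.exp (φ (x, R x)) * v (x, R x) * s)) •
            (ContinuousLinearMap.fst ℝ ℝ ℝ)
          + (4 * π * (x, R x).2 ^ 2 * (ρ (x, R x) + (ρ (x, R x) + p (x, R x)) *
              (v (x, R x)) ^ 2 / q)) •
            (ContinuousLinearMap.snd ℝ ℝ ℝ))
          (1, Real.exp (φ (x, R x)) * v (x, R x) / s) = 0 := by
        simp only [ContinuousLinearMap.add_apply, ContinuousLinearMap.smul_apply,
          ContinuousLinearMap.coe_fst', ContinuousLinearMap.coe_snd', smul_eq_mul, hp0]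
        field_simp
        have hqs : q * s ^ 2 = q + v (x, R x) ^ 2 := by
          rw [hs2]; field_simp
        linear_combination (-(4 * π * R x ^ 2 * ρ (x, R x) * rexp (φ (x, R x)) * v (x, R x))) * hqs
      rw [hval] at hcomp
      exact hcomp.mono_of_mem_nhdsWithin (Icc_mem_nhdsGE_of_mem hx)
  exact key
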